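/- Let G be a finite group, let K be a Carter subgroup of G, and let z ∈ Z(K) with z ≠ 1. Assume that any two Carter subgroups of C_G(z) are conjugate in C_G(z). Then z is not conjugate in G to any power z^k with z^k ≠ z: for every g ∈ G and every integer k, if g⁻¹zg = z^k then z^k = z. -/

import Mathlib

/-- A Carter subgroup of a group `G` is a nilpotent self-normalizing subgroup. -/
def IsCarterSubgroup {G : Type*} [Group G] (K : Subgroup G) : Prop :=
  Group.IsNilpotent K ∧ Subgroup.normalizer (K : Set G) = K

/-- If `H ≤ C` is self-normalizing in `G`, then it is self-normalizing in `C`. -/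
lemma aux_normalizer_subgroupOf_self {G : Type*} [Group G] {H C : Subgroup G}
    (hle : H ≤ C) (hH : Subgroup.normalizer (H : Set G) = H) :
    Subgroup.normalizer ((H.subgroupOf C : Subgroup C) : Set C) = H.subgroupOf C := by
  refine le_antisymm ?_ Subgroup.le_normalizer
  intro x hx
  rw [Subgroup.mem_normalizer_iff] at hx
  have hxG : (x : G) ∈ Subgroup.normalizer (H : Set G) := by
    rw [Subgroup.mem_normalizer_iff]
    intro h
    constructor
    · intro hh
      have := (hx ⟨h, hle hh⟩).1 (by simpa [Subgroup.mem_subgroupOf] using hh)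
      simpa [Subgroup.mem_subgroupOf] using this
    · intro hh
      have hhC : h ∈ C := by
        have h2 : (x : G)⁻¹ * ((x : G) * h * (x : G)⁻¹) * (x : G) ∈ C :=
          C.mul_mem (C.mul_mem (C.inv_mem x.2) (hle hh)) x.2
        have h3 : (x : G)⁻¹ * ((x : G) * h * (x : G)⁻¹) * (x : G) = h := by group
        rwa [h3] at h2
      have := (hx ⟨h, hhC⟩).2 (by simpa [Subgroup.mem_subgroupOf] using hh)
      simpa [Subgroup.mem_subgroupOf] using this
  rw [hH] at hxG
  simpa [Subgroup.mem_subgroupOf] using hxG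

/-- A nontrivial central element `z` of a Carter subgroup is not conjugate to any
power `z^k ≠ z`, provided Carter subgroups of `C_G(z)` are conjugate. -/
theorem not_conjugate_to_power {G : Type*} [Group G] [Finite G]
    (K : Subgroup G) (hK : IsCarterSubgroup K)
    (z : G) (hz : z ≠ 1) (hzK : z ∈ K) (hzc : ∀ k ∈ K, z * k = k * z)
    (hconj : ∀ K₁ K₂ : Subgroup ↥(Subgroup.centralizer {z}),
      IsCarterSubgroup K₁ → IsCarterSubgroup K₂ →
      ∃ g : ↥(Subgroup.centralizer {z}), K₁.map (MulAut.conj g).toMonoidHom = K₂) :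
    ∀ (g : G) (k : ℤ), g⁻¹ * z * g = z ^ k → z ^ k = z := by
  obtain ⟨hKnil, hKnorm⟩ := hK
  intro g k hgk
  set C := Subgroup.centralizer ({z} : Set G) with hCdef
  have hKC : K ≤ C := by
    intro x hx
    rw [Subgroup.mem_centralizer_iff]
    rintro y hy
    rw [Set.mem_singleton_iff] at hy
    rw [hy]
    exact hzc x hx
  -- basic commutation facts
  have hzg : z * g = g * z ^ k := by rw [← hgk]; group
  have hgz : z ^ k * g⁻¹ = g⁻¹ * z := by rw [← hgk]; group
  set L : Subgroup G := K.map (MulAut.conj g).toMonoidHom with hLdef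
  have hmemL : ∀ x ∈ K, g * x * g⁻¹ ∈ L := by
    intro x hx
    refine ⟨x, hx, ?_⟩
    simp [MulAut.conj_apply]
  have hmemL' : ∀ y ∈ L, ∃ x ∈ K, g * x * g⁻¹ = y := by
    intro y hy
    obtain ⟨x, hx, rfl⟩ := hy
    exact ⟨x, hx, by simp [MulAut.conj_apply]⟩
  have hLC : L ≤ C := by
    intro y hy
    obtain ⟨x, hx, rfl⟩ := hmemL' y hy
    rw [Subgroup.mem_centralizer_iff]
    rintro u hu
    rw [Set.mem_singleton_iff] at hu
    rw [hu]
    have hcom : Commute z x := hzc x hx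
    have h2 : z ^ k * x = x * z ^ k := (hcom.zpow_left k).eq
    calc z * (g * x * g⁻¹) = (z * g) * (x * g⁻¹) := by group
      _ = g * (z ^ k * x) * g⁻¹ := by rw [hzg]; group
      _ = g * (x * z ^ k) * g⁻¹ := by rw [h2]
      _ = (g * x) * (z ^ k * g⁻¹) := by group
      _ = g * x * g⁻¹ * z := by rw [hgz]; group
  -- Carter subgroups of C
  have hLnorm : Subgroup.normalizer (L : Set G) = L := by
    rw [hLdef, ← Subgroup.map_equiv_normalizer_eq K (MulAut.conj g), hKnorm]
  haveI : Group.IsNilpotent K := hKnil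
  have hnilK₁ : Group.IsNilpotent (K.subgroupOf C) :=
    nilpotent_of_mulEquiv (Subgroup.subgroupOfEquivOfLe hKC).symm
  haveI hnilL : Group.IsNilpotent L :=
    nilpotent_of_mulEquiv
      (Subgroup.equivMapOfInjective K (MulAut.conj g).toMonoidHom
        (MulAut.conj g).injective)
  have hnilK₂ : Group.IsNilpotent (L.subgroupOf C) :=
    nilpotent_of_mulEquiv (Subgroup.subgroupOfEquivOfLe hLC).symm
  obtain ⟨c, hc⟩ := hconj (K.subgroupOf C) (L.subgroupOf C)
    ⟨hnilK₁, aux_normalizer_subgroupOf_self hKC hKnorm⟩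
    ⟨hnilK₂, aux_normalizer_subgroupOf_self hLC hLnorm⟩
  -- translate hc to statements about G
  have dir1 : ∀ h ∈ K, (c : G) * h * (c : G)⁻¹ ∈ L := by
    intro h hh
    have h1 : (⟨h, hKC hh⟩ : C) ∈ K.subgroupOf C := by
      simpa [Subgroup.mem_subgroupOf] using hh
    have h2 : (MulAut.conj c) ⟨h, hKC hh⟩ ∈ L.subgroupOf C := by
      rw [← hc]
      exact ⟨_, h1, rfl⟩
    simpa [Subgroup.mem_subgroupOf, MulAut.conj_apply] using h2
  have dir2 : ∀ h : G, (c : G) * h * (c : G)⁻¹ ∈ L → h ∈ K := by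
    intro h hh
    have h4 : (⟨(c : G) * h * (c : G)⁻¹, hLC hh⟩ : C) ∈ L.subgroupOf C := by
      simpa [Subgroup.mem_subgroupOf] using hh
    rw [← hc] at h4
    obtain ⟨u, hu, huv⟩ := h4
    have huvG : (c : G) * (u : G) * (c : G)⁻¹ = (c : G) * h * (c : G)⁻¹ := by
      have := congrArg (Subtype.val) huv
      simpa [MulAut.conj_apply] using this
    have huh : (u : G) = h :=
      mul_left_cancel (mul_right_cancel huvG)
    have huK : (u : G) ∈ K := by simpa [Subgroup.mem_subgroupOf] using hu
    rwa [huh] at huK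
  -- w := g⁻¹ * c normalizes K, hence lies in K
  set w : G := g⁻¹ * (c : G) with hwdef
  have hwK : w ∈ K := by
    rw [← hKnorm, Subgroup.mem_normalizer_iff]
    intro h
    constructor
    · intro hh
      obtain ⟨x, hxK, hxe⟩ := hmemL' _ (dir1 h hh)
      have hx2 : w * h * w⁻¹ = x := by
        calc w * h * w⁻¹ = g⁻¹ * ((c : G) * h * (c : G)⁻¹) * g := by rw [hwdef]; group
          _ = g⁻¹ * (g * x * g⁻¹) * g := by rw [hxe]
          _ = x := by group
      rwa [hx2]
    · intro hh
      apply dir2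
      have h5 := hmemL _ hh
      have h6 : g * (w * h * w⁻¹) * g⁻¹ = (c : G) * h * (c : G)⁻¹ := by
        rw [hwdef]; group
      rwa [h6] at h5
  -- conclude
  have hcz : z * (c : G) = (c : G) * z :=
    Subgroup.mem_centralizer_iff.1 c.2 z (Set.mem_singleton z)
  have hgE : g = (c : G) * w⁻¹ := by rw [hwdef]; group
  have h3 : (c : G)⁻¹ * z * (c : G) = z := by rw [mul_assoc, hcz]; group
  have h4 : w * z * w⁻¹ = z := by rw [← hzc w hwK]; group
  calc z ^ k = g⁻¹ * z * g := hgk.symm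
    _ = w * ((c : G)⁻¹ * z * (c : G)) * w⁻¹ := by rw [hgE]; group
    _ = w * z * w⁻¹ := by rw [h3]
    _ = z := h4
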